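/- arXiv:2204.03787 — 3 statements merged into one kernel-verified Lean document; each statement's English description precedes it below -/
import Mathlib

section
/- Let G be a connected graph, let e be an edge not in E(G), and let G̃ = G + e be the graph obtained by adding e. Then for every α ∈ [0,1), ρ(RD_α(G̃)) > ρ(RD_α(G)). -/
open Matrix BigOperators Finset

/-- The reciprocal distance (Harary) matrix of a graph. -/
noncomputable def RDmat {V : Type*} [Fintype V] [DecidableEq V] (G : SimpleGraph V) :
    Matrix V V ℝ :=
  Matrix.of fun i j => if i = j then 0 else (1 : ℝ) / (G.dist i j)

/-- The reciprocal transmission of a vertex. -/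
noncomputable def RTr {V : Type*} [Fintype V] [DecidableEq V] (G : SimpleGraph V) (v : V) : ℝ :=
  ∑ u ∈ Finset.univ.erase v, (1 : ℝ) / (G.dist u v)

/-- The generalized reciprocal distance matrix `RD_α(G) = α RT(G) + (1-α) RD(G)`. -/
noncomputable def RDalpha {V : Type*} [Fintype V] [DecidableEq V] (G : SimpleGraph V) (α : ℝ) :
    Matrix V V ℝ :=
  α • Matrix.diagonal (RTr G) + (1 - α) • RDmat G

/-- The `i`-th largest eigenvalue (1-indexed, with multiplicity) of a real matrix,
obtained from the roots of its characteristic polynomial sorted decreasingly. -/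
noncomputable def eigDesc {V : Type*} [Fintype V] [DecidableEq V] (M : Matrix V V ℝ) (i : ℕ) : ℝ :=
  ((M.charpoly.roots.sort (· ≤ ·)).reverse).getD (i - 1) 0

/-- The spectral radius (largest eigenvalue) of a real symmetric matrix. -/
noncomputable def specRadius {V : Type*} [Fintype V] [DecidableEq V] (M : Matrix V V ℝ) : ℝ :=
  eigDesc M 1

/-- The join of two graphs. -/
def gjoin {V₁ V₂ : Type*} (G₁ : SimpleGraph V₁) (G₂ : SimpleGraph V₂) :
    SimpleGraph (V₁ ⊕ V₂) where
  Adj x y := match x, y with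
    | Sum.inl a, Sum.inl b => G₁.Adj a b
    | Sum.inr a, Sum.inr b => G₂.Adj a b
    | Sum.inl _, Sum.inr _ => True
    | Sum.inr _, Sum.inl _ => True
  symm := ⟨by rintro (a|a) (b|b) h <;> first | exact G₁.adj_symm h | exact G₂.adj_symm h | trivial⟩
  loopless := ⟨by rintro (a|a) h <;> first | exact G₁.irrefl h | exact G₂.irrefl h⟩


section Helpers

open Polynomial

variable {n : Type*} [Fintype n] [DecidableEq n]

lemma charpoly_diag (d : n → ℝ) :
    (Matrix.diagonal d).charpoly = ∏ i, (X - C (d i)) := by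
  have h : charmatrix (Matrix.diagonal d) = Matrix.diagonal (fun i => (X : ℝ[X]) - C (d i)) := by
    ext i j
    by_cases hij : i = j
    · subst hij; simp
    · simp [hij, Matrix.diagonal_apply_ne _ hij]
  rw [Matrix.charpoly, h, Matrix.det_diagonal]

lemma charpoly_conj (U : Matrix.unitaryGroup n ℝ) (A : Matrix n n ℝ) :
    (star (U : Matrix n n ℝ) * A * (U : Matrix n n ℝ)).charpoly = A.charpoly := by
  have h1 : star (U : Matrix n n ℝ) * (U : Matrix n n ℝ) = 1 := by
    simpa using (unitary.mem_iff.mp U.2).1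
  have h2 : (U : Matrix n n ℝ) * star (U : Matrix n n ℝ) = 1 := by
    simpa using (unitary.mem_iff.mp U.2).2
  set U' : Matrix n n ℝ[X] := (C : ℝ →+* ℝ[X]).mapMatrix (U : Matrix n n ℝ) with hU'
  set V' : Matrix n n ℝ[X] := (C : ℝ →+* ℝ[X]).mapMatrix (star (U : Matrix n n ℝ)) with hV'
  have hVU : V' * U' = 1 := by
    rw [hU', hV', ← RingHom.map_mul, h1]; simp
  have hUV : U' * V' = 1 := by
    rw [hU', hV', ← RingHom.map_mul, h2]; simp
  have key : charmatrix (star (U : Matrix n n ℝ) * A * (U : Matrix n n ℝ)) =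
      V' * charmatrix A * U' := by
    rw [charmatrix, charmatrix]
    rw [mul_sub, sub_mul]
    congr 1
    · rw [← (Matrix.scalar_commute (X : ℝ[X]) (fun r => Commute.all _ _) V').eq, mul_assoc, hVU,
        mul_one]
    · rw [hU', hV', ← RingHom.map_mul, ← RingHom.map_mul]
  rw [Matrix.charpoly, Matrix.charpoly, key, Matrix.det_mul, Matrix.det_mul]
  have : V'.det * U'.det = 1 := by
    rw [← Matrix.det_mul, hVU, Matrix.det_one]
  calc V'.det * (charmatrix A).det * U'.det
      = V'.det * U'.det * (charmatrix A).det := by ring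
    _ = (charmatrix A).det := by rw [this, one_mul]

lemma roots_charpoly {A : Matrix n n ℝ} (hA : A.IsHermitian) :
    A.charpoly.roots = Finset.univ.val.map hA.eigenvalues := by
  have hd : star (hA.eigenvectorUnitary : Matrix n n ℝ) * A * (hA.eigenvectorUnitary : Matrix n n ℝ)
      = Matrix.diagonal hA.eigenvalues := by
    rw [← Unitary.conjStarAlgAut_star_apply (S := ℝ), hA.conjStarAlgAut_star_eigenvectorUnitary]
    congr 1
  have := charpoly_conj hA.eigenvectorUnitary A
  rw [hd, charpoly_diag] at this
  rw [← this]
  have : ∏ i, (X - C (hA.eigenvalues i)) =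
      (Multiset.map (fun a => X - C a) (Finset.univ.val.map hA.eigenvalues)).prod := by
    rw [Multiset.map_map]; rfl
  rw [this, Polynomial.roots_multiset_prod_X_sub_C]

lemma specRadius_spec [Nonempty n] {A : Matrix n n ℝ} (hA : A.IsHermitian) :
    (∃ j, specRadius A = hA.eigenvalues j) ∧ ∀ i, hA.eigenvalues i ≤ specRadius A := by
  have hroots := roots_charpoly hA
  set l := A.charpoly.roots.sort (· ≤ ·) with hl
  have hsort : l.Pairwise (· ≤ ·) := A.charpoly.roots.pairwise_sort (· ≤ ·)
  have hrev : l.reverse.Pairwise (fun a b => b ≤ a) := by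
    rw [List.pairwise_reverse]; exact hsort
  have hne : l ≠ [] := by
    have : l.length = Fintype.card n := by
      rw [hl, Multiset.length_sort, hroots, Multiset.card_map]
      simp
    intro h
    rw [h] at this
    simp at this
    exact (Fintype.card_pos (α := n)).ne this
  have hne' : l.reverse ≠ [] := by simpa using hne
  obtain ⟨a, t, hat⟩ := List.exists_cons_of_ne_nil hne'
  have hspec : specRadius A = a := by
    rw [specRadius, eigDesc, ← hl, hat]; rfl
  have hmem : a ∈ A.charpoly.roots := by
    rw [← Multiset.mem_sort (α := ℝ) (· ≤ ·), ← hl, ← List.mem_reverse, hat]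
    exact List.mem_cons_self
  constructor
  · rw [hroots] at hmem
    obtain ⟨j, _, hj⟩ := Multiset.mem_map.mp hmem
    exact ⟨j, by rw [hspec, hj]⟩
  · intro i
    have hmemi : hA.eigenvalues i ∈ l.reverse := by
      rw [List.mem_reverse, hl, Multiset.mem_sort, hroots]
      exact Multiset.mem_map_of_mem _ (Finset.mem_univ i)
    rw [hat] at hmemi
    rw [hspec]
    rcases List.mem_cons.mp hmemi with h | h
    · exact le_of_eq h
    · have hrev' : List.Pairwise (fun a b => b ≤ a) (a :: t) := hat ▸ hrev
      exact List.rel_of_pairwise_cons hrev' h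

lemma dq (A : Matrix n n ℝ) (x : n → ℝ) :
    x ⬝ᵥ (A *ᵥ x) = ∑ i, ∑ k, A i k * x i * x k := by
  simp only [dotProduct, mulVec, Finset.mul_sum]
  exact Finset.sum_congr rfl fun i _ => Finset.sum_congr rfl fun k _ => by ring

lemma herm_key [Nonempty n] {A : Matrix n n ℝ} (hA : A.IsHermitian) (x : n → ℝ) :
    x ⬝ᵥ (A *ᵥ x) ≤ specRadius A * (x ⬝ᵥ x) ∧
    (x ⬝ᵥ (A *ᵥ x) = specRadius A * (x ⬝ᵥ x) → A *ᵥ x = specRadius A • x) := by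
  obtain ⟨⟨j, hj⟩, hub⟩ := specRadius_spec hA
  set ρ := specRadius A with hρ
  set μ := hA.eigenvalues with hμ
  set Uc := (hA.eigenvectorUnitary : Matrix n n ℝ) with hUc
  have hstar : star Uc = Ucᵀ := by
    ext i k; simp [Matrix.star_eq_conjTranspose, Matrix.conjTranspose_apply]
  have h1 : Ucᵀ * Uc = 1 := by
    rw [← hstar]; exact (Unitary.mem_iff.mp hA.eigenvectorUnitary.2).1
  have h2 : Uc * Ucᵀ = 1 := by
    rw [← hstar]; exact (Unitary.mem_iff.mp hA.eigenvectorUnitary.2).2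
  have hAeq : A = Uc * Matrix.diagonal μ * Ucᵀ := by
    rw [← hstar]
    have := hA.spectral_theorem; rw [Unitary.conjStarAlgAut_apply] at this
    exact this
  set y := Ucᵀ *ᵥ x with hy
  have hxy : Uc *ᵥ y = x := by
    rw [hy, Matrix.mulVec_mulVec, h2, Matrix.one_mulVec]
  have hAx : A *ᵥ x = Uc *ᵥ (Matrix.diagonal μ *ᵥ y) := by
    rw [hAeq, hy, ← Matrix.mulVec_mulVec, ← Matrix.mulVec_mulVec]
  have hdx : ∀ z : n → ℝ, x ⬝ᵥ (Uc *ᵥ z) = y ⬝ᵥ z := by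
    intro z
    rw [Matrix.dotProduct_mulVec, hy, Matrix.mulVec_transpose]
  have hquad : x ⬝ᵥ (A *ᵥ x) = ∑ i, μ i * y i ^ 2 := by
    rw [hAx, hdx]
    simp only [dotProduct, Matrix.mulVec_diagonal]
    exact Finset.sum_congr rfl fun i _ => by ring
  have hnorm : x ⬝ᵥ x = ∑ i, y i ^ 2 := by
    have : y ⬝ᵥ y = x ⬝ᵥ (Uc *ᵥ y) := (hdx y).symm
    rw [hxy] at this
    rw [← this]
    exact Finset.sum_congr rfl fun i _ => by ring
  constructor
  · rw [hquad, hnorm, Finset.mul_sum]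
    exact Finset.sum_le_sum fun i _ =>
      mul_le_mul_of_nonneg_right (hub i) (sq_nonneg _)
  · intro heq
    have hzero : ∑ i, (ρ - μ i) * y i ^ 2 = 0 := by
      have : ∑ i, (ρ - μ i) * y i ^ 2 = ρ * (x ⬝ᵥ x) - x ⬝ᵥ (A *ᵥ x) := by
        rw [hquad, hnorm, Finset.mul_sum, ← Finset.sum_sub_distrib]
        exact Finset.sum_congr rfl fun i _ => by ring
      rw [this, heq, sub_self]
    have hall := (Finset.sum_eq_zero_iff_of_nonneg (fun i _ =>
      mul_nonneg (sub_nonneg.mpr (hub i)) (sq_nonneg _))).mp hzero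
    have hdiag : Matrix.diagonal μ *ᵥ y = ρ • y := by
      funext i
      have hi := hall i (Finset.mem_univ i)
      rcases mul_eq_zero.mp hi with h | h
      · have : μ i = ρ := by linarith [sub_eq_zero.mp h]
        simp [Matrix.mulVec_diagonal, this]
      · have : y i = 0 := by
          have := sq_eq_zero_iff.mp h
          exact this
        simp [Matrix.mulVec_diagonal, this]
    rw [hAx, hdiag, Matrix.mulVec_smul, hxy]

lemma exists_pos_eigvec [Nonempty n] {A : Matrix n n ℝ} (hA : A.IsHermitian)
    (hnn : ∀ i j, 0 ≤ A i j) (hpos : ∀ i j, i ≠ j → 0 < A i j) :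
    ∃ x : n → ℝ, (∀ i, 0 < x i) ∧ x ⬝ᵥ x = 1 ∧ x ⬝ᵥ (A *ᵥ x) = specRadius A := by
  obtain ⟨⟨j, hj⟩, hub⟩ := specRadius_spec hA
  set ρ := specRadius A with hρ
  set w : n → ℝ := ⇑(hA.eigenvectorBasis j) with hw
  have hAw : A *ᵥ w = ρ • w := by rw [hj]; exact hA.mulVec_eigenvectorBasis j
  have hww : w ⬝ᵥ w = 1 := by
    have h1 : star (hA.eigenvectorUnitary : Matrix n n ℝ) * hA.eigenvectorUnitary = 1 :=
      (Unitary.mem_iff.mp hA.eigenvectorUnitary.2).1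
    have := congrFun (congrFun h1 j) j
    simp only [Matrix.mul_apply, Matrix.star_apply, Matrix.one_apply_eq] at this
    rw [← this]
    exact Finset.sum_congr rfl fun k _ => by
      simp [Matrix.IsHermitian.eigenvectorUnitary_apply, hw, mul_comm]
  set x : n → ℝ := fun i => |w i| with hx
  have hxx : x ⬝ᵥ x = 1 := by
    rw [← hww]
    exact Finset.sum_congr rfl fun i _ => abs_mul_abs_self _
  have hwAw : w ⬝ᵥ (A *ᵥ w) = ρ := by
    rw [hAw, dotProduct_smul, hww]; simp
  have hge : ρ ≤ x ⬝ᵥ (A *ᵥ x) := by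
    rw [← hwAw, dq, dq]
    refine Finset.sum_le_sum fun i _ => Finset.sum_le_sum fun k _ => ?_
    calc A i k * w i * w k ≤ |A i k * w i * w k| := le_abs_self _
      _ = A i k * x i * x k := by
          rw [abs_mul, abs_mul, abs_of_nonneg (hnn i k)]
  have hle : x ⬝ᵥ (A *ᵥ x) ≤ ρ := by
    have := (herm_key hA x).1
    rwa [hxx, mul_one] at this
  have heq : x ⬝ᵥ (A *ᵥ x) = ρ := le_antisymm hle hge
  have hAx : A *ᵥ x = ρ • x := (herm_key hA x).2 (by rw [heq, hxx, mul_one])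
  have hxnn : ∀ i, 0 ≤ x i := fun i => abs_nonneg _
  have hxne : ∃ k, 0 < x k := by
    by_contra h
    push_neg at h
    have : ∀ i, x i = 0 := fun i => le_antisymm (h i) (hxnn i)
    have : x ⬝ᵥ x = 0 := by simp [dotProduct, this]
    rw [hxx] at this; norm_num at this
  obtain ⟨k, hk⟩ := hxne
  refine ⟨x, fun i => ?_, hxx, heq⟩
  by_contra hle0
  push_neg at hle0
  have hxi : x i = 0 := le_antisymm hle0 (hxnn i)
  have hik : i ≠ k := by intro h; rw [h] at hxi; exact hk.ne' hxi
  have hrow : (A *ᵥ x) i = 0 := by rw [hAx]; simp [hxi]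
  have hterm : ∀ m ∈ Finset.univ, 0 ≤ A i m * x m :=
    fun m _ => mul_nonneg (hnn i m) (hxnn m)
  have : A i k * x k = 0 := by
    have hsum : ∑ m, A i m * x m = 0 := hrow
    exact (Finset.sum_eq_zero_iff_of_nonneg hterm).mp hsum k (Finset.mem_univ k)
  exact absurd this (mul_pos (hpos i k hik) hk).ne'

end Helpers

/-- Proposition 3.3: for `0 ≤ α < 1`, adding an edge strictly increases the spectral radius
of `RD_α`. -/
theorem stmt6 {V : Type*} [Fintype V] [DecidableEq V] (G : SimpleGraph V) (hG : G.Connected)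
    (u v : V) (huv : u ≠ v) (he : ¬ G.Adj u v)
    (α : ℝ) (hα0 : 0 ≤ α) (hα1 : α < 1) :
    specRadius (RDalpha (G ⊔ SimpleGraph.fromEdgeSet {s(u, v)}) α) >
      specRadius (RDalpha G α) := by
  classical
  haveI : Nonempty V := ⟨u⟩
  set G' := G ⊔ SimpleGraph.fromEdgeSet {s(u, v)} with hG'def
  have hle : G ≤ G' := le_sup_left
  have hG' : G'.Connected := hG.mono hle
  have h1α : (0:ℝ) < 1 - α := by linarith
  have hdist_pos : ∀ i j : V, i ≠ j → 0 < G.dist i j := fun i j h => hG.pos_dist_of_ne h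
  have hdist_pos' : ∀ i j : V, i ≠ j → 0 < G'.dist i j := fun i j h => hG'.pos_dist_of_ne h
  have hdist_anti : ∀ i j : V, G'.dist i j ≤ G.dist i j := fun i j =>
    SimpleGraph.Reachable.dist_anti hle (hG.preconnected i j)
  have hadj' : G'.Adj u v := by
    refine Or.inr ?_
    rw [SimpleGraph.fromEdgeSet_adj]
    exact ⟨Set.mem_singleton _, huv⟩
  have hduv' : G'.dist u v = 1 := SimpleGraph.dist_eq_one_iff_adj.mpr hadj'
  have hduv : 2 ≤ G.dist u v := by
    have h0 : 0 < G.dist u v := hdist_pos u v huv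
    have h1 : G.dist u v ≠ 1 := fun h => he (SimpleGraph.dist_eq_one_iff_adj.mp h)
    omega
  have recip_mono : ∀ i j : V, i ≠ j → (1:ℝ) / (G.dist i j) ≤ 1 / (G'.dist i j) := by
    intro i j h
    apply one_div_le_one_div_of_le
    · exact_mod_cast hdist_pos' i j h
    · exact_mod_cast hdist_anti i j
  have hRTr_nonneg : ∀ (H : SimpleGraph V) (w : V), 0 ≤ RTr H w := by
    intro H w
    apply Finset.sum_nonneg
    intro i _
    positivity
  have hRTr_mono : ∀ w : V, RTr G w ≤ RTr G' w := by
    intro w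
    apply Finset.sum_le_sum
    intro i hi
    exact recip_mono i w (Finset.ne_of_mem_erase hi)
  have hdiagE : ∀ (H : SimpleGraph V) (i : V), RDalpha H α i i = α * RTr H i := by
    intro H i
    simp [RDalpha, RDmat]
  have hoffE : ∀ (H : SimpleGraph V) (i j : V), i ≠ j →
      RDalpha H α i j = (1 - α) * (1 / (H.dist i j)) := by
    intro H i j h
    simp [RDalpha, RDmat, Matrix.diagonal_apply_ne _ h, h]
  have hermRD : ∀ (H : SimpleGraph V), (RDalpha H α).IsHermitian := by
    intro H
    show (RDalpha H α)ᴴ = RDalpha H α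
    ext i j
    rw [Matrix.conjTranspose_apply, star_trivial]
    by_cases hij : i = j
    · subst hij; rfl
    · rw [hoffE H j i (Ne.symm hij), hoffE H i j hij, SimpleGraph.dist_comm]
  set M := RDalpha G α with hM
  set N := RDalpha G' α with hN
  have hMnn : ∀ i j : V, 0 ≤ M i j := by
    intro i j
    rw [hM]
    by_cases hij : i = j
    · subst hij; rw [hdiagE]; exact mul_nonneg hα0 (hRTr_nonneg G i)
    · rw [hoffE G i j hij]; positivity
  have hMpos : ∀ i j : V, i ≠ j → 0 < M i j := by
    intro i j hij
    rw [hM, hoffE G i j hij]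
    have : (0:ℝ) < G.dist i j := by exact_mod_cast hdist_pos i j hij
    positivity
  have hMN : ∀ i j : V, M i j ≤ N i j := by
    intro i j
    rw [hM, hN]
    by_cases hij : i = j
    · subst hij
      rw [hdiagE, hdiagE]
      exact mul_le_mul_of_nonneg_left (hRTr_mono i) hα0
    · rw [hoffE G i j hij, hoffE G' i j hij]
      exact mul_le_mul_of_nonneg_left (recip_mono i j hij) h1α.le
  have hMNuv : M u v < N u v := by
    rw [hM, hN, hoffE G u v huv, hoffE G' u v huv, hduv']
    apply mul_lt_mul_of_pos_left _ h1α
    have h2 : (2:ℝ) ≤ G.dist u v := by exact_mod_cast hduv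
    have : (1:ℝ) / (G.dist u v) ≤ 1 / 2 := by
      apply one_div_le_one_div_of_le <;> linarith
    rw [one_div] at this
    norm_num
    linarith
  obtain ⟨x, hxpos, hxx, hxMx⟩ := exists_pos_eigvec (hermRD G) hMnn hMpos
  have hNbound := (herm_key (hermRD G') x).1
  rw [hxx, mul_one] at hNbound
  have hlt : x ⬝ᵥ (M *ᵥ x) < x ⬝ᵥ (N *ᵥ x) := by
    rw [dq, dq]
    apply Finset.sum_lt_sum
    · intro i _
      exact Finset.sum_le_sum fun k _ =>
        mul_le_mul_of_nonneg_right
          (mul_le_mul_of_nonneg_right (hMN i k) (hxpos i).le) (hxpos k).le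
    · refine ⟨u, Finset.mem_univ u, ?_⟩
      apply Finset.sum_lt_sum
      · intro k _
        exact mul_le_mul_of_nonneg_right
          (mul_le_mul_of_nonneg_right (hMN u k) (hxpos u).le) (hxpos k).le
      · exact ⟨v, Finset.mem_univ v,
          mul_lt_mul_of_pos_right
            (mul_lt_mul_of_pos_right hMNuv (hxpos u)) (hxpos v)⟩
  calc specRadius M = x ⬝ᵥ (M *ᵥ x) := hxMx.symm
    _ < x ⬝ᵥ (N *ᵥ x) := hlt
    _ ≤ specRadius N := hNbound
end

section
/- Let K_{a,n−a} be the complete bipartite graph of order n ≥ 4 with 1 ≤ a ≤ ⌊n/2⌋, and let α ∈ [0,1]. Then RD_α(K_{a,n−a}) is positive semidefinite if and only if α ≥ α₀, where α₀ = (n − 1 + 3a(n−a)) / (2n(n−1) + 4a(n−a)). -/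
open Matrix BigOperators Finset

open SimpleGraph
section dist
variable {a b : ℕ}

lemma distLR (i : Fin a) (j : Fin b) :
    (completeBipartiteGraph (Fin a) (Fin b)).dist (Sum.inl i) (Sum.inr j) = 1 := by
  rw [SimpleGraph.dist_eq_one_iff_adj]; simp

lemma distRL (i : Fin a) (j : Fin b) :
    (completeBipartiteGraph (Fin a) (Fin b)).dist (Sum.inr j) (Sum.inl i) = 1 := by
  rw [SimpleGraph.dist_eq_one_iff_adj]; simp

lemma distLL (hb : 1 ≤ b) {i i' : Fin a} (h : i ≠ i') :
    (completeBipartiteGraph (Fin a) (Fin b)).dist (Sum.inl i) (Sum.inl i') = 2 := by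
  set G := completeBipartiteGraph (Fin a) (Fin b) with hG
  have j : Fin b := ⟨0, hb⟩
  have a1 : G.Adj (Sum.inl i) (Sum.inr j) := by rw [hG]; simp
  have a2 : G.Adj (Sum.inr j) (Sum.inl i') := by rw [hG]; simp
  have h2 : G.dist (Sum.inl i) (Sum.inl i') ≤ 2 := by
    have := G.dist_le (Walk.cons a1 (Walk.cons a2 Walk.nil))
    simpa using this
  have h0 : 0 < G.dist (Sum.inl i) (Sum.inl i') :=
    Reachable.pos_dist_of_ne ⟨Walk.cons a1 (Walk.cons a2 Walk.nil)⟩ (by simp [h])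
  have h1 : G.dist (Sum.inl i) (Sum.inl i') ≠ 1 := by
    intro hc
    rw [SimpleGraph.dist_eq_one_iff_adj, hG] at hc
    simp at hc
  omega

lemma distRR (ha : 1 ≤ a) {j j' : Fin b} (h : j ≠ j') :
    (completeBipartiteGraph (Fin a) (Fin b)).dist (Sum.inr j) (Sum.inr j') = 2 := by
  set G := completeBipartiteGraph (Fin a) (Fin b) with hG
  have i : Fin a := ⟨0, ha⟩
  have a1 : G.Adj (Sum.inr j) (Sum.inl i) := by rw [hG]; simp
  have a2 : G.Adj (Sum.inl i) (Sum.inr j') := by rw [hG]; simp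
  have h2 : G.dist (Sum.inr j) (Sum.inr j') ≤ 2 := by
    have := G.dist_le (Walk.cons a1 (Walk.cons a2 Walk.nil))
    simpa using this
  have h0 : 0 < G.dist (Sum.inr j) (Sum.inr j') :=
    Reachable.pos_dist_of_ne ⟨Walk.cons a1 (Walk.cons a2 Walk.nil)⟩ (by simp [h])
  have h1 : G.dist (Sum.inr j) (Sum.inr j') ≠ 1 := by
    intro hc
    rw [SimpleGraph.dist_eq_one_iff_adj, hG] at hc
    simp at hc
  omega

lemma RTr_univ {V : Type*} [Fintype V] [DecidableEq V] (G : SimpleGraph V) (v : V) :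
    RTr G v = ∑ u, (1 : ℝ) / (G.dist u v) := by
  rw [RTr]
  exact Finset.sum_erase _ (by simp)

lemma sum_ite_ne {k : ℕ} (i : Fin k) (c : ℝ) :
    ∑ i' : Fin k, (if i' = i then (0:ℝ) else c) = (k - 1 : ℝ) * c := by
  have : ∀ i' : Fin k, (if i' = i then (0:ℝ) else c) = c - (if i' = i then c else 0) := by
    intro i'; split <;> ring
  rw [Finset.sum_congr rfl fun i' _ => this i', Finset.sum_sub_distrib,
    Finset.sum_ite_eq' Finset.univ i (fun _ => c)]
  simp [mul_comm]
  ring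

lemma RTrL (hb : 1 ≤ b) (i : Fin a) :
    RTr (completeBipartiteGraph (Fin a) (Fin b)) (Sum.inl i) = ((a:ℝ)-1)/2 + b := by
  rw [RTr_univ, Fintype.sum_sum_type]
  have h1 : ∀ i' : Fin a, (1:ℝ) / ((completeBipartiteGraph (Fin a) (Fin b)).dist (Sum.inl i') (Sum.inl i)) = if i' = i then 0 else 1/2 := by
    intro i'
    split
    · subst ‹i' = i›; simp
    · rw [distLL hb ‹i' ≠ i›]; norm_num
  have h2 : ∀ j : Fin b, (1:ℝ) / ((completeBipartiteGraph (Fin a) (Fin b)).dist (Sum.inr j) (Sum.inl i)) = 1 := by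
    intro j; rw [distRL]; norm_num
  rw [Finset.sum_congr rfl fun i' _ => h1 i', Finset.sum_congr rfl fun j _ => h2 j,
    sum_ite_ne]
  simp
  ring

lemma RTrR (ha : 1 ≤ a) (j : Fin b) :
    RTr (completeBipartiteGraph (Fin a) (Fin b)) (Sum.inr j) = ((b:ℝ)-1)/2 + a := by
  rw [RTr_univ, Fintype.sum_sum_type]
  have h1 : ∀ j' : Fin b, (1:ℝ) / ((completeBipartiteGraph (Fin a) (Fin b)).dist (Sum.inr j') (Sum.inr j)) = if j' = j then 0 else 1/2 := by
    intro j'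
    split
    · subst ‹j' = j›; simp
    · rw [distRR ha ‹j' ≠ j›]; norm_num
  have h2 : ∀ i : Fin a, (1:ℝ) / ((completeBipartiteGraph (Fin a) (Fin b)).dist (Sum.inl i) (Sum.inr j)) = 1 := by
    intro i; rw [distLR]; norm_num
  rw [Finset.sum_congr rfl fun j' _ => h1 j', Finset.sum_congr rfl fun i _ => h2 i,
    sum_ite_ne]
  simp
  ring



end dist

lemma RD_herm {V : Type*} [Fintype V] [DecidableEq V] (G : SimpleGraph V) (α : ℝ) :
    (RDalpha G α).IsHermitian := by
  have : (RDalpha G α)ᵀ = RDalpha G α := by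
    ext i j
    simp only [RDalpha, RDmat, Matrix.transpose_apply, Matrix.add_apply, Matrix.smul_apply,
      Matrix.diagonal_apply, Matrix.of_apply, smul_eq_mul]
    rw [SimpleGraph.dist_comm]
    congr 1
    · by_cases h : i = j <;> simp [h, eq_comm]
    · by_cases h : i = j <;> simp [h, eq_comm]
  simpa [Matrix.IsHermitian, Matrix.conjTranspose_eq_transpose_of_trivial] using this

lemma qid {k : ℕ} (c d : ℝ) (y : Fin k → ℝ) :
    ∑ i, y i * (∑ i', (if i = i' then c else d) * y i')
      = (c - d) * (∑ i, (y i)^2) + d * (∑ i, y i)^2 := by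
  have h1 : ∀ i, (∑ i', (if i = i' then c else d) * y i')
      = (c - d) * y i + d * ∑ i', y i' := by
    intro i
    have h : ∀ i' : Fin k, (if i = i' then c else d) * y i'
        = (if i' = i then (c-d) * y i' else 0) + d * y i' := by
      intro i'; rcases eq_comm.mp rfl with _; by_cases hi : i = i' <;> simp [hi, eq_comm (a := i')] <;> ring
    rw [Finset.sum_congr rfl fun i' _ => h i', Finset.sum_add_distrib,
      Finset.sum_ite_eq' Finset.univ i (fun i' => (c-d) * y i'), ← Finset.mul_sum]
    simp
  rw [Finset.sum_congr rfl fun i _ => congrArg (y i * ·) (h1 i)]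
  have : ∀ i, y i * ((c - d) * y i + d * ∑ i', y i')
      = (c - d) * (y i)^2 + d * (y i * ∑ i', y i') := by intro i; ring
  rw [Finset.sum_congr rfl fun i _ => this i, Finset.sum_add_distrib, ← Finset.mul_sum,
    ← Finset.mul_sum, ← Finset.sum_mul, sq]


open SimpleGraph
section ent
variable {a b : ℕ} (α : ℝ)

lemma entLL (hb : 1 ≤ b) (i i' : Fin a) :
    RDalpha (completeBipartiteGraph (Fin a) (Fin b)) α (Sum.inl i) (Sum.inl i')
      = if i = i' then α * (((a:ℝ)-1)/2 + b) else (1-α) * (1/2) := by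
  simp only [RDalpha, RDmat, Matrix.add_apply, Matrix.smul_apply, Matrix.diagonal_apply,
    Matrix.of_apply, smul_eq_mul]
  by_cases h : i = i'
  · subst h; simp [RTrL hb]
  · have hne : (Sum.inl i : Fin a ⊕ Fin b) ≠ Sum.inl i' := by simp [h]
    rw [if_neg hne, if_neg hne, if_neg h, distLL hb h]
    norm_num

lemma entRR (ha : 1 ≤ a) (j j' : Fin b) :
    RDalpha (completeBipartiteGraph (Fin a) (Fin b)) α (Sum.inr j) (Sum.inr j')
      = if j = j' then α * (((b:ℝ)-1)/2 + a) else (1-α) * (1/2) := by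
  simp only [RDalpha, RDmat, Matrix.add_apply, Matrix.smul_apply, Matrix.diagonal_apply,
    Matrix.of_apply, smul_eq_mul]
  by_cases h : j = j'
  · subst h; simp [RTrR ha]
  · have hne : (Sum.inr j : Fin a ⊕ Fin b) ≠ Sum.inr j' := by simp [h]
    rw [if_neg hne, if_neg hne, if_neg h, distRR ha h]
    norm_num

lemma entLR (i : Fin a) (j : Fin b) :
    RDalpha (completeBipartiteGraph (Fin a) (Fin b)) α (Sum.inl i) (Sum.inr j) = 1 - α := by
  simp only [RDalpha, RDmat, Matrix.add_apply, Matrix.smul_apply, Matrix.diagonal_apply,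
    Matrix.of_apply, smul_eq_mul]
  rw [if_neg (by simp), if_neg (by simp), distLR]
  norm_num

lemma entRL (i : Fin a) (j : Fin b) :
    RDalpha (completeBipartiteGraph (Fin a) (Fin b)) α (Sum.inr j) (Sum.inl i) = 1 - α := by
  simp only [RDalpha, RDmat, Matrix.add_apply, Matrix.smul_apply, Matrix.diagonal_apply,
    Matrix.of_apply, smul_eq_mul]
  rw [if_neg (by simp), if_neg (by simp), distRL]
  norm_num

lemma quadform (ha : 1 ≤ a) (hb : 1 ≤ b) (x : Fin a ⊕ Fin b → ℝ) :
    x ⬝ᵥ (RDalpha (completeBipartiteGraph (Fin a) (Fin b)) α) *ᵥ x =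
      (α*(((a:ℝ)-1)/2 + b) - (1-α)/2) * (∑ i, x (Sum.inl i)^2)
      + (α*(((b:ℝ)-1)/2 + a) - (1-α)/2) * (∑ j, x (Sum.inr j)^2)
      + (1-α)/2 * ((∑ i, x (Sum.inl i))^2 + (∑ j, x (Sum.inr j))^2)
      + 2*(1-α) * (∑ i, x (Sum.inl i)) * (∑ j, x (Sum.inr j)) := by
  set M := RDalpha (completeBipartiteGraph (Fin a) (Fin b)) α with hM
  have hexp : x ⬝ᵥ M *ᵥ x = ∑ u, x u * ∑ v, M u v * x v := by
    simp [dotProduct, Matrix.mulVec, dotProduct]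
  rw [hexp, Fintype.sum_sum_type]
  have hinner1 : ∀ i : Fin a, (∑ v, M (Sum.inl i) v * x v)
      = (∑ i', (if i = i' then α*(((a:ℝ)-1)/2 + b) else (1-α)*(1/2)) * x (Sum.inl i'))
        + (1-α) * ∑ j, x (Sum.inr j) := by
    intro i
    rw [Fintype.sum_sum_type, Finset.mul_sum]
    congr 1
    · exact Finset.sum_congr rfl fun i' _ => by rw [hM, entLL α hb]
    · exact Finset.sum_congr rfl fun j _ => by rw [hM, entLR]
  have hinner2 : ∀ j : Fin b, (∑ v, M (Sum.inr j) v * x v)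
      = (∑ j', (if j = j' then α*(((b:ℝ)-1)/2 + a) else (1-α)*(1/2)) * x (Sum.inr j'))
        + (1-α) * ∑ i, x (Sum.inl i) := by
    intro j
    rw [Fintype.sum_sum_type, Finset.mul_sum]
    rw [add_comm]
    congr 1
    · exact Finset.sum_congr rfl fun j' _ => by rw [hM, entRR α ha]
    · exact Finset.sum_congr rfl fun i _ => by rw [hM, entRL]
  rw [Finset.sum_congr rfl fun i _ => congrArg (x (Sum.inl i) * ·) (hinner1 i),
      Finset.sum_congr rfl fun j _ => congrArg (x (Sum.inr j) * ·) (hinner2 j)]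
  have e1 : ∀ i : Fin a, x (Sum.inl i) * ((∑ i', (if i = i' then α*(((a:ℝ)-1)/2 + b) else (1-α)*(1/2)) * x (Sum.inl i')) + (1-α) * ∑ j, x (Sum.inr j))
      = x (Sum.inl i) * (∑ i', (if i = i' then α*(((a:ℝ)-1)/2 + b) else (1-α)*(1/2)) * x (Sum.inl i'))
        + (1-α) * (x (Sum.inl i) * ∑ j, x (Sum.inr j)) := by intro i; ring
  have e2 : ∀ j : Fin b, x (Sum.inr j) * ((∑ j', (if j = j' then α*(((b:ℝ)-1)/2 + a) else (1-α)*(1/2)) * x (Sum.inr j')) + (1-α) * ∑ i, x (Sum.inl i))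
      = x (Sum.inr j) * (∑ j', (if j = j' then α*(((b:ℝ)-1)/2 + a) else (1-α)*(1/2)) * x (Sum.inr j'))
        + (1-α) * (x (Sum.inr j) * ∑ i, x (Sum.inl i)) := by intro j; ring
  rw [Finset.sum_congr rfl fun i _ => e1 i, Finset.sum_congr rfl fun j _ => e2 j,
    Finset.sum_add_distrib, Finset.sum_add_distrib,
    qid (α*(((a:ℝ)-1)/2 + b)) ((1-α)*(1/2)) (fun i => x (Sum.inl i)),
    qid (α*(((b:ℝ)-1)/2 + a)) ((1-α)*(1/2)) (fun j => x (Sum.inr j)),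
    ← Finset.mul_sum, ← Finset.mul_sum, ← Finset.sum_mul, ← Finset.sum_mul]
  ring

end ent

set_option maxHeartbeats 2000000 in
/-- Theorem 3.11: `RD_α(K_{a,n-a})` is positive semidefinite iff `α ≥ α₀`, where
`α₀ = (n - 1 + 3a(n-a)) / (2n(n-1) + 4a(n-a))`. -/
theorem stmt13 (n a : ℕ) (hn : 4 ≤ n) (ha1 : 1 ≤ a) (ha2 : a ≤ n / 2)
    (α : ℝ) (hα : α ∈ Set.Icc (0 : ℝ) 1) :
    (RDalpha (completeBipartiteGraph (Fin a) (Fin (n - a))) α).PosSemidef ↔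
      ((n : ℝ) - 1 + 3 * a * ((n : ℝ) - a)) /
        (2 * n * ((n : ℝ) - 1) + 4 * a * ((n : ℝ) - a)) ≤ α := by
  obtain ⟨hα0, hα1⟩ := hα
  set b := n - a with hbdef
  have hb2 : 2 ≤ b := by omega
  have hb1 : 1 ≤ b := by omega
  have hab : a + b = n := by omega
  have hA : (1:ℝ) ≤ (a:ℝ) := by exact_mod_cast ha1
  have hB : (2:ℝ) ≤ (b:ℝ) := by exact_mod_cast hb2
  have hn' : (n:ℝ) = (a:ℝ) + (b:ℝ) := by exact_mod_cast hab.symm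
  have hABp : (0:ℝ) < (a:ℝ)*(b:ℝ) :=
    mul_pos (show (0:ℝ) < (a:ℝ) by linarith) (show (0:ℝ) < (b:ℝ) by linarith)
  have hD : (0:ℝ) < 2*((a:ℝ)+(b:ℝ))*((a:ℝ)+(b:ℝ)-1)+4*(a:ℝ)*(b:ℝ) := by
    linarith [mul_pos (show (0:ℝ) < 2*((a:ℝ)+(b:ℝ)) by linarith)
      (show (0:ℝ) < (a:ℝ)+(b:ℝ)-1 by linarith)]
  have hN : (0:ℝ) < (a:ℝ)+(b:ℝ)-1+3*(a:ℝ)*(b:ℝ) := by linarith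
  have hRHS : ((n : ℝ) - 1 + 3 * a * ((n : ℝ) - a)) /
        (2 * n * ((n : ℝ) - 1) + 4 * a * ((n : ℝ) - a))
      = ((a:ℝ)+(b:ℝ)-1+3*(a:ℝ)*(b:ℝ)) / (2*((a:ℝ)+(b:ℝ))*((a:ℝ)+(b:ℝ)-1)+4*(a:ℝ)*(b:ℝ)) := by
    rw [hn']; congr 1 <;> ring
  rw [hRHS]
  constructor
  · -- PSD → threshold
    intro hPSD
    set B' := (b:ℝ)*(((b:ℝ)-1)/2 + α*(a:ℝ)) with hB'
    set C' := (1-α)*(a:ℝ)*(b:ℝ) with hC'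
    have hx0 := (posSemidef_iff_dotProduct_mulVec.mp hPSD).2 (Sum.elim (fun _ : Fin a => B') (fun _ : Fin b => -C'))
    rw [star_trivial] at hx0
    rw [quadform α ha1 hb1] at hx0
    have s1 : ∑ i : Fin a, Sum.elim (fun _ : Fin a => B') (fun _ : Fin b => -C') (Sum.inl i)
        = (a:ℝ) * B' := by simp [mul_comm]
    have s2 : ∑ i : Fin a, (Sum.elim (fun _ : Fin a => B') (fun _ : Fin b => -C') (Sum.inl i))^2
        = (a:ℝ) * B'^2 := by simp [mul_comm]
    have s3 : ∑ j : Fin b, Sum.elim (fun _ : Fin a => B') (fun _ : Fin b => -C') (Sum.inr j)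
        = (b:ℝ) * (-C') := by simp [mul_comm]
    have s4 : ∑ j : Fin b, (Sum.elim (fun _ : Fin a => B') (fun _ : Fin b => -C') (Sum.inr j))^2
        = (b:ℝ) * C'^2 := by simp [mul_comm]
    rw [s1, s2, s3, s4] at hx0
    have hB'pos : 0 < B' := by
      rw [hB']
      have h1 : (0:ℝ) < ((b:ℝ)-1)/2 + α*(a:ℝ) := by
        have := mul_nonneg hα0 (show (0:ℝ) ≤ (a:ℝ) by linarith)
        linarith
      exact mul_pos (by linarith) h1
    have hid : (α*(((a:ℝ)-1)/2 + (b:ℝ)) - (1-α)/2) * ((a:ℝ) * B'^2)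
        + (α*(((b:ℝ)-1)/2 + (a:ℝ)) - (1-α)/2) * ((b:ℝ) * C'^2)
        + (1-α)/2 * (((a:ℝ) * B')^2 + ((b:ℝ) * (-C'))^2)
        + 2*(1-α) * ((a:ℝ) * B') * ((b:ℝ) * (-C'))
        = B' * ((a:ℝ)*(b:ℝ)*(α*(2*((a:ℝ)+(b:ℝ))*((a:ℝ)+(b:ℝ)-1)+4*(a:ℝ)*(b:ℝ))
            - ((a:ℝ)+(b:ℝ)-1+3*(a:ℝ)*(b:ℝ)))/4) := by
      rw [hB', hC']; ring
    rw [hid] at hx0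
    have h2 : (0:ℝ) ≤ (a:ℝ)*(b:ℝ)*(α*(2*((a:ℝ)+(b:ℝ))*((a:ℝ)+(b:ℝ)-1)+4*(a:ℝ)*(b:ℝ))
        - ((a:ℝ)+(b:ℝ)-1+3*(a:ℝ)*(b:ℝ)))/4 :=
      le_of_mul_le_mul_left (by rw [mul_zero]; exact hx0) hB'pos
    rw [div_le_iff₀ hD]
    have habpos : (0:ℝ) < (a:ℝ)*(b:ℝ) :=
      mul_pos (show (0:ℝ) < (a:ℝ) by linarith) (show (0:ℝ) < (b:ℝ) by linarith)
    by_contra hcon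
    push_neg at hcon
    have h5 : (a:ℝ)*(b:ℝ)*(α*(2*((a:ℝ)+(b:ℝ))*((a:ℝ)+(b:ℝ)-1)+4*(a:ℝ)*(b:ℝ))
        - ((a:ℝ)+(b:ℝ)-1+3*(a:ℝ)*(b:ℝ))) < 0 :=
      mul_neg_of_pos_of_neg habpos (by linarith)
    linarith
  · -- threshold → PSD
    intro h0
    have hαD : (a:ℝ)+(b:ℝ)-1+3*(a:ℝ)*(b:ℝ)
        ≤ α*(2*((a:ℝ)+(b:ℝ))*((a:ℝ)+(b:ℝ)-1)+4*(a:ℝ)*(b:ℝ)) := by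
      rw [div_le_iff₀ hD] at h0; linarith
    have hαpos : 0 < α := lt_of_lt_of_le (div_pos hN hD) h0
    refine posSemidef_iff_dotProduct_mulVec.mpr ⟨RD_herm _ _, fun x => ?_⟩
    rw [star_trivial, quadform α ha1 hb1]
    set SA := ∑ i, x (Sum.inl i) with hSA
    set SB := ∑ j, x (Sum.inr j) with hSB
    set TA := ∑ i, x (Sum.inl i)^2 with hTA
    set TB := ∑ j, x (Sum.inr j)^2 with hTB
    have hCS1 : SA^2 ≤ (a:ℝ) * TA := by
      have := sq_sum_le_card_mul_sum_sq (s := Finset.univ) (f := fun i => x (Sum.inl i))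
      simpa [hSA, hTA] using this
    have hCS2 : SB^2 ≤ (b:ℝ) * TB := by
      have := sq_sum_le_card_mul_sum_sq (s := Finset.univ) (f := fun j => x (Sum.inr j))
      simpa [hSB, hTB] using this
    -- cA ≥ 0
    have hfacA : 2*((a:ℝ)+(b:ℝ))*((a:ℝ)+(b:ℝ)-1)+4*(a:ℝ)*(b:ℝ)
        ≤ ((a:ℝ)+(b:ℝ)-1+3*(a:ℝ)*(b:ℝ)) * ((a:ℝ)+2*(b:ℝ)) := by
      linarith [mul_nonneg (sq_nonneg (a:ℝ)) (show (0:ℝ) ≤ 3*(b:ℝ)-1 by linarith),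
        mul_nonneg (mul_nonneg (show (0:ℝ) ≤ (a:ℝ) by linarith)
          (show (0:ℝ) ≤ (b:ℝ) by linarith)) (show (0:ℝ) ≤ 6*(b:ℝ)-5 by linarith)]
    have hfacB : 2*((a:ℝ)+(b:ℝ))*((a:ℝ)+(b:ℝ)-1)+4*(a:ℝ)*(b:ℝ)
        ≤ ((a:ℝ)+(b:ℝ)-1+3*(a:ℝ)*(b:ℝ)) * (2*(a:ℝ)+(b:ℝ)) := by
      linarith [mul_nonneg (sq_nonneg (b:ℝ)) (show (0:ℝ) ≤ 3*(a:ℝ)-1 by linarith),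
        mul_nonneg (mul_nonneg (show (0:ℝ) ≤ (a:ℝ) by linarith)
          (show (0:ℝ) ≤ (b:ℝ) by linarith)) (show (0:ℝ) ≤ 6*(a:ℝ)-5 by linarith)]
    have hcA : 0 ≤ α*(((a:ℝ)-1)/2 + (b:ℝ)) - (1-α)/2 := by
      have h1 : (2*((a:ℝ)+(b:ℝ))*((a:ℝ)+(b:ℝ)-1)+4*(a:ℝ)*(b:ℝ)) * 1
          ≤ (2*((a:ℝ)+(b:ℝ))*((a:ℝ)+(b:ℝ)-1)+4*(a:ℝ)*(b:ℝ)) * (α*((a:ℝ)+2*(b:ℝ))) := by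
        linarith [mul_le_mul_of_nonneg_right hαD (show (0:ℝ) ≤ (a:ℝ)+2*(b:ℝ) by linarith), hfacA]
      have := le_of_mul_le_mul_left h1 hD
      linarith
    have hcB : 0 ≤ α*(((b:ℝ)-1)/2 + (a:ℝ)) - (1-α)/2 := by
      have h1 : (2*((a:ℝ)+(b:ℝ))*((a:ℝ)+(b:ℝ)-1)+4*(a:ℝ)*(b:ℝ)) * 1
          ≤ (2*((a:ℝ)+(b:ℝ))*((a:ℝ)+(b:ℝ)-1)+4*(a:ℝ)*(b:ℝ)) * (α*(2*(a:ℝ)+(b:ℝ))) := by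
        linarith [mul_le_mul_of_nonneg_right hαD (show (0:ℝ) ≤ 2*(a:ℝ)+(b:ℝ) by linarith), hfacB]
      have := le_of_mul_le_mul_left h1 hD
      linarith
    have hdet : (1-α)^2*(a:ℝ)*(b:ℝ)
        ≤ (((a:ℝ)-1)/2+α*(b:ℝ)) * (((b:ℝ)-1)/2+α*(a:ℝ)) := by linarith [hαD]
    have hm11 : 0 < ((a:ℝ)-1)/2 + α*(b:ℝ) := by
      linarith [mul_pos hαpos (show (0:ℝ) < (b:ℝ) by linarith)]
    -- R ≥ 0
    have hR : 0 ≤ (b:ℝ)*(((a:ℝ)-1)/2+α*(b:ℝ))*SA^2 + (a:ℝ)*(((b:ℝ)-1)/2+α*(a:ℝ))*SB^2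
        + 2*(1-α)*(a:ℝ)*(b:ℝ)*SA*SB := by
      have hid : (((a:ℝ)-1)/2+α*(b:ℝ)) * ((b:ℝ)*(((a:ℝ)-1)/2+α*(b:ℝ))*SA^2
            + (a:ℝ)*(((b:ℝ)-1)/2+α*(a:ℝ))*SB^2 + 2*(1-α)*(a:ℝ)*(b:ℝ)*SA*SB)
          = (b:ℝ)*((((a:ℝ)-1)/2+α*(b:ℝ))*SA + (1-α)*(a:ℝ)*SB)^2
            + (a:ℝ)*SB^2*((((a:ℝ)-1)/2+α*(b:ℝ))*(((b:ℝ)-1)/2+α*(a:ℝ)) - (1-α)^2*(a:ℝ)*(b:ℝ)) := by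
        ring
      have h3 : 0 ≤ (((a:ℝ)-1)/2+α*(b:ℝ)) * ((b:ℝ)*(((a:ℝ)-1)/2+α*(b:ℝ))*SA^2
            + (a:ℝ)*(((b:ℝ)-1)/2+α*(a:ℝ))*SB^2 + 2*(1-α)*(a:ℝ)*(b:ℝ)*SA*SB) := by
        rw [hid]
        have t1 : (0:ℝ) ≤ (b:ℝ)*((((a:ℝ)-1)/2+α*(b:ℝ))*SA + (1-α)*(a:ℝ)*SB)^2 :=
          mul_nonneg (by linarith) (sq_nonneg _)
        have t2 : (0:ℝ) ≤ (a:ℝ)*SB^2*((((a:ℝ)-1)/2+α*(b:ℝ))*(((b:ℝ)-1)/2+α*(a:ℝ))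
            - (1-α)^2*(a:ℝ)*(b:ℝ)) :=
          mul_nonneg (mul_nonneg (by linarith) (sq_nonneg _)) (sub_nonneg.mpr hdet)
        linarith
      exact le_of_mul_le_mul_left (by rw [mul_zero]; exact h3) hm11
    -- assemble
    have habpos : (0:ℝ) < (a:ℝ)*(b:ℝ) :=
      mul_pos (show (0:ℝ) < (a:ℝ) by linarith) (show (0:ℝ) < (b:ℝ) by linarith)
    have hid2 : (a:ℝ)*(b:ℝ)*((α*(((a:ℝ)-1)/2 + (b:ℝ)) - (1-α)/2) * TA
          + (α*(((b:ℝ)-1)/2 + (a:ℝ)) - (1-α)/2) * TB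
          + (1-α)/2 * (SA^2 + SB^2) + 2*(1-α) * SA * SB)
        = ((b:ℝ)*(((a:ℝ)-1)/2+α*(b:ℝ))*SA^2 + (a:ℝ)*(((b:ℝ)-1)/2+α*(a:ℝ))*SB^2
            + 2*(1-α)*(a:ℝ)*(b:ℝ)*SA*SB)
          + (b:ℝ)*(α*(((a:ℝ)-1)/2 + (b:ℝ)) - (1-α)/2)*((a:ℝ)*TA - SA^2)
          + (a:ℝ)*(α*(((b:ℝ)-1)/2 + (a:ℝ)) - (1-α)/2)*((b:ℝ)*TB - SB^2) := by ring
    have h4 : 0 ≤ (a:ℝ)*(b:ℝ)*((α*(((a:ℝ)-1)/2 + (b:ℝ)) - (1-α)/2) * TA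
          + (α*(((b:ℝ)-1)/2 + (a:ℝ)) - (1-α)/2) * TB
          + (1-α)/2 * (SA^2 + SB^2) + 2*(1-α) * SA * SB) := by
      rw [hid2]
      have t1 : 0 ≤ (b:ℝ)*(α*(((a:ℝ)-1)/2 + (b:ℝ)) - (1-α)/2)*((a:ℝ)*TA - SA^2) :=
        mul_nonneg (mul_nonneg (by linarith) hcA) (by linarith)
      have t2 : 0 ≤ (a:ℝ)*(α*(((b:ℝ)-1)/2 + (a:ℝ)) - (1-α)/2)*((b:ℝ)*TB - SB^2) :=
        mul_nonneg (mul_nonneg (by linarith) hcB) (by linarith)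
      linarith
    exact le_of_mul_le_mul_left (by rw [mul_zero]; exact h4) habpos
end

section
/- Let G be a connected graph on n vertices and α ∈ [0,1]. Then ρ(RD_α(G)) ≤ max over i ∈ {1,…,n} of [ α·RTr_G(v_i) + (1−α)·√( (n−1) · Σ_{k≠i} (1/d_G(v_k,v_i))² ) ]. -/
open Matrix BigOperators Finset

lemma myHasEig {n : Type*} [Fintype n] [DecidableEq n]
    {M : Matrix n n ℝ} {μ : ℝ} (h : M.charpoly.IsRoot μ) :
    Module.End.HasEigenvalue (Matrix.toLin' M) μ := by
  have hdet : (μ • (1 : Matrix n n ℝ) - M).det = 0 := by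
    have := h
    rw [Polynomial.IsRoot, Matrix.charpoly, Polynomial.eval, ← Polynomial.coe_eval₂RingHom,
      RingHom.map_det] at this
    convert this using 2
    ext i j
    by_cases hij : i = j
    · subst hij
      simp [Matrix.charmatrix_apply_eq, Matrix.one_apply, Polynomial.eval₂RingHom]
    · simp [Matrix.charmatrix_apply_ne _ _ _ hij, Matrix.one_apply_ne hij,
        Polynomial.eval₂RingHom]
  rw [Module.End.hasEigenvalue_iff, Module.End.eigenspace_def, ne_comm]
  refine ne_of_lt (LinearMap.bot_lt_ker_of_det_eq_zero ?_)
  have h1 : Matrix.toLin' M - μ • (1 : Module.End ℝ (n → ℝ)) = Matrix.toLin' (M - μ • 1) := by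
    rw [map_sub, _root_.map_smul, Matrix.toLin'_one]
    rfl
  rw [h1, LinearMap.det_toLin']
  have : M - μ • 1 = -(μ • (1 : Matrix n n ℝ) - M) := by rw [neg_sub]
  rw [this, Matrix.det_neg, hdet, mul_zero]

/-- Theorem 3.14: upper bound for `ρ(RD_α(G))`. -/
theorem stmt14 {V : Type*} [Fintype V] [DecidableEq V] (G : SimpleGraph V) (hG : G.Connected)
    (α : ℝ) (hα : α ∈ Set.Icc (0 : ℝ) 1) :
    specRadius (RDalpha G α) ≤
      Finset.univ.sup' (Finset.univ_nonempty_iff.mpr hG.nonempty)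
        (fun i => α * RTr G i + (1 - α) *
          Real.sqrt (((Fintype.card V : ℝ) - 1) *
            ∑ k ∈ Finset.univ.erase i, ((1 : ℝ) / (G.dist k i)) ^ 2)) := by
  haveI : Nonempty V := hG.nonempty
  obtain ⟨hα0, hα1⟩ := hα
  have h1α : (0:ℝ) ≤ 1 - α := by linarith
  have hne : (Finset.univ : Finset V).Nonempty := Finset.univ_nonempty_iff.mpr hG.nonempty
  have hRTr_nonneg : ∀ v : V, 0 ≤ RTr G v := fun v =>
    Finset.sum_nonneg fun u _ => by positivity
  -- a generic bound for the RHS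
  have hbound : ∀ k : V,
      α * RTr G k + (1 - α) * ∑ j ∈ Finset.univ.erase k, (1:ℝ) / (G.dist k j) ≤
      Finset.univ.sup' hne (fun i => α * RTr G i + (1 - α) *
        Real.sqrt (((Fintype.card V : ℝ) - 1) *
          ∑ k ∈ Finset.univ.erase i, ((1 : ℝ) / (G.dist k i)) ^ 2)) := by
    intro k
    refine le_trans ?_ (Finset.le_sup' _ (Finset.mem_univ k))
    have hcs : ∑ j ∈ Finset.univ.erase k, (1:ℝ) / (G.dist k j) ≤
        Real.sqrt (((Fintype.card V : ℝ) - 1) *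
          ∑ j ∈ Finset.univ.erase k, ((1 : ℝ) / (G.dist j k)) ^ 2) := by
      have hsum : ∀ j, (1:ℝ) / (G.dist k j) = (1:ℝ) / (G.dist j k) := fun j => by
        rw [SimpleGraph.dist_comm]
      simp_rw [hsum]
      set s := Finset.univ.erase k with hs
      have hcard : (s.card : ℝ) = (Fintype.card V : ℝ) - 1 := by
        rw [hs, Finset.card_erase_of_mem (Finset.mem_univ k), Finset.card_univ]
        have : 1 ≤ Fintype.card V := Fintype.card_pos
        push_cast [Nat.cast_sub this]
        ring
      rw [← hcard, Real.le_sqrt (Finset.sum_nonneg fun j _ => by positivity)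
        (by positivity)]
      exact sq_sum_le_card_mul_sum_sq
    nlinarith [hcs]
  -- now identify the spectral radius
  rcases eq_or_ne (((RDalpha G α).charpoly.roots.sort (· ≤ ·)).reverse) [] with hL | hL
  · have : specRadius (RDalpha G α) = 0 := by
      simp [specRadius, eigDesc, hL]
    rw [this]
    refine le_trans ?_ (hbound hne.choose)
    have : 0 ≤ ∑ j ∈ Finset.univ.erase hne.choose, (1:ℝ) / (G.dist hne.choose j) :=
      Finset.sum_nonneg fun j _ => by positivity
    nlinarith [hRTr_nonneg hne.choose]
  · set μ := specRadius (RDalpha G α) with hμ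
    have hmem : μ ∈ (RDalpha G α).charpoly.roots := by
      obtain ⟨a, t, hat⟩ := List.exists_cons_of_ne_nil hL
      have : μ = a := by rw [hμ, specRadius, eigDesc, hat]; rfl
      rw [this]
      have : a ∈ (((RDalpha G α).charpoly.roots.sort (· ≤ ·)).reverse) := by
        rw [hat]; exact List.mem_cons_self
      rw [List.mem_reverse, Multiset.mem_sort] at this
      exact this
    have hroot : (RDalpha G α).charpoly.IsRoot μ :=
      Polynomial.isRoot_of_mem_roots hmem
    obtain ⟨k, hk⟩ := eigenvalue_mem_ball (myHasEig hroot)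
    rw [Metric.mem_closedBall, Real.dist_eq] at hk
    have hdiag : RDalpha G α k k = α * RTr G k := by
      simp [RDalpha, RDmat, Matrix.diagonal_apply_eq]
    have hoff : ∀ j ∈ Finset.univ.erase k, ‖RDalpha G α k j‖ = (1 - α) * ((1:ℝ) / (G.dist k j)) := by
      intro j hj
      have hjk : k ≠ j := (Finset.ne_of_mem_erase hj).symm
      have : RDalpha G α k j = (1 - α) * ((1:ℝ) / (G.dist k j)) := by
        simp [RDalpha, RDmat, Matrix.diagonal_apply_ne _ hjk, hjk]
      rw [this, Real.norm_eq_abs, abs_of_nonneg (by positivity)]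
    have hμle : μ ≤ α * RTr G k + (1 - α) * ∑ j ∈ Finset.univ.erase k, (1:ℝ) / (G.dist k j) := by
      have h2 : μ - RDalpha G α k k ≤ ∑ j ∈ Finset.univ.erase k, ‖RDalpha G α k j‖ :=
        le_trans (le_abs_self _) hk
      rw [Finset.sum_congr rfl hoff, ← Finset.mul_sum, hdiag] at h2
      linarith
    exact le_trans hμle (hbound k)
end
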